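/- Let f, g ∈ ℚ[t] be polynomials with deg f = 2 and deg g = 4. Then f·g divides f³ + g³ + 1 in ℚ[t] if and only if either g = −f² + f − 1, or there exists a polynomial h ∈ ℚ[t] of degree 1 such that f = (1/2)(h² − h + 1) and g = (1/4)(h² + h + 1)(h² − h + 3). -/

import Mathlib

open Polynomial

/-- If `p ∣ q`, `q ≠ 0` and `q.natDegree ≤ p.natDegree`, then `q` is a nonzero
scalar multiple of `p`. -/
private lemma scalar_of_dvd {p q : ℚ[X]} (hd : p ∣ q) (hq : q ≠ 0)
    (hle : q.natDegree ≤ p.natDegree) : ∃ c : ℚ, c ≠ 0 ∧ q = C c * p := by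
  obtain ⟨w, rfl⟩ := hd
  have hp : p ≠ 0 := left_ne_zero_of_mul hq
  have hw : w ≠ 0 := right_ne_zero_of_mul hq
  have hmul := natDegree_mul hp hw
  have hw0 : w.natDegree = 0 := by omega
  obtain ⟨c, hc⟩ : ∃ c, w = C c := ⟨w.coeff 0, eq_C_of_natDegree_eq_zero hw0⟩
  refine ⟨c, ?_, by rw [hc]; ring⟩
  rintro rfl
  simp [hc] at hw

/-- A polynomial without rational roots has no monic-degree-one divisors. -/
private lemma no_linear_dvd {q : ℚ[X]} (h : ∀ x : ℚ, q.eval x ≠ 0) {l : ℚ[X]}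
    (hl : l.natDegree = 1) : ¬ l ∣ q := by
  intro hd
  have hl0 : l ≠ 0 := fun h0 => by simp [h0] at hl
  have hc1 : l.coeff 1 ≠ 0 := by
    have := leadingCoeff_ne_zero.mpr hl0
    rwa [leadingCoeff, hl] at this
  set r : ℚ := -(l.coeff 0) / l.coeff 1 with hr
  have heval : l.eval r = 0 := by
    conv_lhs => rw [Polynomial.eq_X_add_C_of_natDegree_le_one hl.le]
    simp only [eval_add, eval_mul, eval_C, eval_X]
    field_simp [hr]
    rw [hr, mul_div_assoc', mul_neg, neg_div, mul_div_cancel_left₀ _ hc1]; ring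
  obtain ⟨m, rfl⟩ := hd
  exact h r (by simp [heval])

private lemma noroot_sq (p : ℚ[X]) : ∀ x : ℚ, (p^2 - p + 1).eval x ≠ 0 := by
  intro x h
  simp only [eval_add, eval_sub, eval_pow, eval_one] at h
  nlinarith [sq_nonneg (2 * p.eval x - 1)]

private lemma noroot_ne (p : ℚ[X]) : p^2 - p + 1 ≠ 0 := fun h =>
  noroot_sq p 0 (by rw [h, eval_zero])

private lemma indep1 {v : ℚ[X]} (hv : 1 ≤ v.natDegree) {a b : ℚ}
    (h : C a * v + C b = 0) : a = 0 ∧ b = 0 := by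
  have hv0 : v ≠ 0 := fun h0 => by simp [h0] at hv
  have ha : a = 0 := by
    by_contra ha
    have h1 : (C a * v).natDegree = v.natDegree := by
      rw [natDegree_mul (C_ne_zero.mpr ha) hv0, natDegree_C]; omega
    have h2 : C a * v = -C b := by linear_combination h
    rw [h2, natDegree_neg, natDegree_C] at h1
    omega
  refine ⟨ha, ?_⟩
  have : C b = (0:ℚ[X]) := by rw [ha] at h; simpa using h
  simpa using (C_eq_zero.mp this)

private lemma indep2 {v : ℚ[X]} (hv : v.natDegree = 1) {a b c : ℚ}
    (h : C a * v^2 + C b * v + C c = 0) : a = 0 ∧ b = 0 ∧ c = 0 := by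
  have hv0 : v ≠ 0 := fun h0 => by simp [h0] at hv
  have ha : a = 0 := by
    by_contra ha
    have h1 : (C a * v^2).natDegree = 2 := by
      rw [natDegree_mul (C_ne_zero.mpr ha) (pow_ne_zero _ hv0), natDegree_C,
        natDegree_pow, hv]
    have h2 : C a * v^2 = -(C b * v + C c) := by linear_combination h
    have h3 : (C a * v^2).natDegree ≤ 1 := by
      rw [h2, natDegree_neg]
      refine (natDegree_add_le _ _).trans (max_le ?_ ?_)
      · exact (natDegree_C_mul_le _ _).trans (by rw [hv])
      · simp
    omega
  have h' : C b * v + C c = 0 := by rw [ha] at h; simpa using h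
  obtain ⟨hb, hc⟩ := indep1 (by omega) h'
  exact ⟨ha, hb, hc⟩

/-- Reduction lemma: if a quadratic `f` divides `u^3+1` for `u` of degree at most 1,
then `u = -1` or `f` is a scalar multiple of `u^2 - u + 1`. -/
private lemma lemA {f u : ℚ[X]} (hf : f.natDegree = 2) (hu : u.natDegree ≤ 1)
    (hdvd : f ∣ u^3 + 1) :
    u = -1 ∨ (u.natDegree = 1 ∧ ∃ k : ℚ, k ≠ 0 ∧ f = C k * (u^2 - u + 1)) := by
  have hf0 : f ≠ 0 := fun h => by simp [h] at hf
  rcases Nat.lt_or_ge u.natDegree 1 with h1 | h1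
  · left
    obtain ⟨e, he⟩ : ∃ e, u = C e := ⟨u.coeff 0, eq_C_of_natDegree_eq_zero (by omega)⟩
    have hC : u^3 + 1 = C (e^3 + 1) := by
      rw [he, ← C_pow, ← C_1, ← C_add]
    rw [hC] at hdvd
    have he3 : e^3 + 1 = 0 := by
      by_contra hne
      have hCz : (C (e^3+1) : ℚ[X]) ≠ 0 := C_ne_zero.mpr hne
      have := natDegree_le_of_dvd hdvd hCz
      rw [hf, natDegree_C] at this
      omega
    have : e = -1 := by nlinarith [sq_nonneg (e - 1), sq_nonneg (e + 1)]
    rw [he, this]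
    simp
  · have hu1 : u.natDegree = 1 := le_antisymm hu h1
    right
    refine ⟨hu1, ?_⟩
    have hu0 : u ≠ 0 := fun h0 => by simp [h0] at hu1
    have key : u^3 + 1 = (u + 1) * (u^2 - u + 1) := by ring
    rw [key] at hdvd
    obtain ⟨d₁, d₂, hd₁, hd₂, hf12⟩ := exists_dvd_and_dvd_of_dvd_mul hdvd
    have hu1deg : (u + 1).natDegree = 1 := by
      rw [← C_1, natDegree_add_C, hu1]
    have hu1ne : u + 1 ≠ 0 := fun h0 => by simp [h0] at hu1deg
    have hQ0 : u^2 - u + 1 ≠ 0 := noroot_ne u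
    have hQdeg : (u^2 - u + 1).natDegree = 2 := by
      have h2 : (u^2).natDegree = 2 := by rw [natDegree_pow, hu1]
      have e1 : u^2 - u + 1 = u^2 + (1 - u) := by ring
      rw [e1, natDegree_add_eq_left_of_natDegree_lt, h2]
      have : (1 - u).natDegree ≤ 1 :=
        (natDegree_sub_le _ _).trans (by simp [hu1])
      omega
    have hd₁0 : d₁ ≠ 0 := fun h0 => hf0 (by rw [hf12, h0, zero_mul])
    have hd₂0 : d₂ ≠ 0 := fun h0 => hf0 (by rw [hf12, h0, mul_zero])
    have hsum : d₁.natDegree + d₂.natDegree = 2 := by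
      rw [← natDegree_mul hd₁0 hd₂0, ← hf12, hf]
    have hle1 : d₁.natDegree ≤ 1 :=
      (natDegree_le_of_dvd hd₁ hu1ne).trans (le_of_eq hu1deg)
    have hd₂ne1 : d₂.natDegree ≠ 1 := fun h0 =>
      no_linear_dvd (noroot_sq u) h0 hd₂
    have hd₂2 : d₂.natDegree = 2 := by omega
    have hd₁deg : d₁.natDegree = 0 := by omega
    obtain ⟨c, hc0, hcq⟩ := scalar_of_dvd hd₂ hQ0 (by omega)
    obtain ⟨e, hed⟩ : ∃ e, d₁ = C e := ⟨d₁.coeff 0, eq_C_of_natDegree_eq_zero hd₁deg⟩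
    have he0 : e ≠ 0 := fun h0 => hd₁0 (by rw [hed, h0, C_0])
    refine ⟨e / c, div_ne_zero he0 hc0, ?_⟩
    calc f = C e * d₂ := by rw [hf12, hed]
      _ = C (e/c) * (C c * d₂) := by
          rw [← mul_assoc, ← C_mul, div_mul_cancel₀ _ hc0]
      _ = C (e/c) * (u^2 - u + 1) := by rw [← hcq]

theorem cubic_congruence_deg2_deg4 (f g : ℚ[X])
    (hf : f.natDegree = 2) (hg : g.natDegree = 4) :
    f * g ∣ f ^ 3 + g ^ 3 + 1 ↔
      g = -f ^ 2 + f - 1 ∨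
        ∃ h : ℚ[X], h.natDegree = 1 ∧
          f = C (1/2 : ℚ) * (h ^ 2 - h + 1) ∧
          g = C (1/4 : ℚ) * ((h ^ 2 + h + 1) * (h ^ 2 - h + 3)) := by
  have hf0 : f ≠ 0 := fun h0 => by simp [h0] at hf
  have hg0 : g ≠ 0 := fun h0 => by simp [h0] at hg
  have h2C : (2:ℚ[X]) * C (1/2:ℚ) = 1 := by
    rw [← map_ofNat (C : ℚ →+* ℚ[X]) 2, ← C_mul]
    norm_num
  have h4C : (4:ℚ[X]) * C (1/4:ℚ) = 1 := by
    rw [← map_ofNat (C : ℚ →+* ℚ[X]) 4, ← C_mul]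
    norm_num
  constructor
  · intro h
    have hfg1 : f ∣ g^3 + 1 := by
      have h1 : f ∣ f^3 + g^3 + 1 := dvd_trans (dvd_mul_right f g) h
      have h2 : f ∣ f^3 := dvd_pow_self f (by norm_num)
      have e : g^3 + 1 = (f^3 + g^3 + 1) - f^3 := by ring
      rw [e]; exact dvd_sub h1 h2
    have hgf1 : g ∣ f^3 + 1 := by
      have h1 : g ∣ f^3 + g^3 + 1 := dvd_trans (dvd_mul_left g f) h
      have h2 : g ∣ g^3 := dvd_pow_self g (by norm_num)
      have e : f^3 + 1 = (f^3 + g^3 + 1) - g^3 := by ring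
      rw [e]; exact dvd_sub h1 h2
    have hsplit : g ∣ (f + 1) * (f^2 - f + 1) := by
      have e : (f + 1) * (f^2 - f + 1) = f^3 + 1 := by ring
      rw [e]; exact hgf1
    obtain ⟨A, B, hA, hB, hgAB⟩ := exists_dvd_and_dvd_of_dvd_mul hsplit
    have hf1deg : (f + 1).natDegree = 2 := by rw [← C_1, natDegree_add_C, hf]
    have hf1ne : f + 1 ≠ 0 := fun h0 => by simp [h0] at hf1deg
    have hQne : f^2 - f + 1 ≠ 0 := noroot_ne f
    have hQdeg : (f^2 - f + 1).natDegree = 4 := by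
      have h2 : (f^2).natDegree = 4 := by rw [natDegree_pow, hf]
      have e1 : f^2 - f + 1 = f^2 + (1 - f) := by ring
      rw [e1, natDegree_add_eq_left_of_natDegree_lt, h2]
      have : (1 - f).natDegree ≤ 2 :=
        (natDegree_sub_le _ _).trans (by simp [hf])
      omega
    have hA0 : A ≠ 0 := fun h0 => hg0 (by rw [hgAB, h0, zero_mul])
    have hB0 : B ≠ 0 := fun h0 => hg0 (by rw [hgAB, h0, mul_zero])
    have hABdeg : A.natDegree + B.natDegree = 4 := by
      rw [← natDegree_mul hA0 hB0, ← hgAB, hg]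
    have hAle : A.natDegree ≤ 2 :=
      (natDegree_le_of_dvd hA hf1ne).trans (le_of_eq hf1deg)
    have hBne3 : B.natDegree ≠ 3 := by
      intro h3
      obtain ⟨l, hl⟩ := hB
      have hl0 : l ≠ 0 := fun h0 => hQne (by rw [hl, h0, mul_zero])
      have hldeg : l.natDegree = 1 := by
        have := natDegree_mul hB0 hl0
        rw [← hl, hQdeg, h3] at this
        omega
      exact no_linear_dvd (noroot_sq f) hldeg ⟨B, by rw [hl]; ring⟩
    have hAcase : A.natDegree = 0 ∨ A.natDegree = 2 := by omega
    rcases hAcase with hA2 | hA2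
    · -- A constant, g = C e' * (f^2 - f + 1), forced e' = -1
      have hBdeg : B.natDegree = 4 := by omega
      obtain ⟨c, hc0, hcB⟩ := scalar_of_dvd hB hQne (by omega)
      obtain ⟨e, heA⟩ : ∃ e, A = C e := ⟨A.coeff 0, eq_C_of_natDegree_eq_zero hA2⟩
      have he0 : e ≠ 0 := fun h0 => hA0 (by rw [heA, h0, C_0])
      have hBeq : B = C c⁻¹ * (f^2 - f + 1) := by
        rw [hcB, ← mul_assoc, ← C_mul, inv_mul_cancel₀ hc0, C_1, one_mul]
      have hge : g = C (e / c) * (f^2 - f + 1) := by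
        rw [hgAB, heA, hBeq, ← mul_assoc, ← C_mul, div_eq_mul_inv]
      have hdg : f ∣ g - C (e/c) := ⟨C (e/c) * (f - 1), by rw [hge]; ring⟩
      have hcube : f ∣ g^3 - (C (e/c))^3 := by
        have e1 : g^3 - (C (e/c))^3 = (g - C (e/c)) * (g^2 + g * C (e/c) + (C (e/c))^2) := by
          ring
        rw [e1]; exact hdg.mul_right _
      have hu3 : f ∣ (C (e/c))^3 + 1 := by
        have e1 : (C (e/c))^3 + 1 = (g^3 + 1) - (g^3 - (C (e/c))^3) := by ring
        rw [e1]; exact dvd_sub hfg1 hcube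
      rcases lemA hf (by simp) hu3 with h1 | ⟨hdeg, _⟩
      · left
        have he' : e / c = -1 := by
          have : C (e/c) = C (-1 : ℚ) := by rw [h1]; simp
          exact C_inj.mp this
        rw [hge, he']
        simp only [map_neg, C_1]
        ring
      · rw [natDegree_C] at hdeg
        omega
    · -- A.natDegree = 2
      have hBdeg : B.natDegree = 2 := by omega
      obtain ⟨c₁, hc₁0, hc₁⟩ := scalar_of_dvd hA hf1ne (by omega)
      obtain ⟨Bt, hBt⟩ := hB
      have hBt0 : Bt ≠ 0 := fun h0 => hQne (by rw [hBt, h0, mul_zero])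
      have hBtdeg : Bt.natDegree = 2 := by
        have := natDegree_mul hB0 hBt0
        rw [← hBt, hQdeg, hBdeg] at this
        omega
      have hAeq : A = C c₁⁻¹ * (f + 1) := by
        rw [hc₁, ← mul_assoc, ← C_mul, inv_mul_cancel₀ hc₁0, C_1, one_mul]
      have hgrep : g = C c₁⁻¹ * ((f + 1) * B) := by rw [hgAB, hAeq]; ring
      set lam : ℚ := B.leadingCoeff / f.leadingCoeff with hlam
      have hlam0 : lam ≠ 0 :=
        div_ne_zero (leadingCoeff_ne_zero.mpr hB0) (leadingCoeff_ne_zero.mpr hf0)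
      set u' : ℚ[X] := B - C lam * f with hu'def
      have hBrep : B = C lam * f + u' := by rw [hu'def]; ring
      have hu'deg : u'.natDegree ≤ 1 := by
        by_cases hz : u' = 0
        · simp [hz]
        · have hdeq : B.degree = (C lam * f).degree := by
            rw [degree_mul, degree_C hlam0, zero_add,
              degree_eq_natDegree hB0, degree_eq_natDegree hf0, hBdeg, hf]
          have hlc : B.leadingCoeff = (C lam * f).leadingCoeff := by
            rw [leadingCoeff_mul, leadingCoeff_C, hlam,
              div_mul_cancel₀ _ (leadingCoeff_ne_zero.mpr hf0)]
          have hlt := degree_sub_lt hdeq hB0 hlc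
          rw [← hu'def] at hlt
          have := natDegree_lt_natDegree hz hlt
          omega
      set u : ℚ[X] := C c₁⁻¹ * u' with hudef
      have hu'2 : u' = C c₁ * u := by
        rw [hudef, ← mul_assoc, ← C_mul, mul_inv_cancel₀ hc₁0, C_1, one_mul]
      have hdgu : f ∣ g - u := by
        refine ⟨C c₁⁻¹ * (C lam * f + C lam + u'), ?_⟩
        rw [hgrep, hudef, hBrep]; ring
      have hu3 : f ∣ u^3 + 1 := by
        have hcube : f ∣ g^3 - u^3 := by
          have e1 : g^3 - u^3 = (g - u) * (g^2 + g*u + u^2) := by ring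
          rw [e1]; exact hdgu.mul_right _
        have e1 : u^3 + 1 = (g^3 + 1) - (g^3 - u^3) := by ring
        rw [e1]; exact dvd_sub hfg1 hcube
      have hudeg : u.natDegree ≤ 1 := (natDegree_C_mul_le _ _).trans hu'deg
      rcases lemA hf hudeg hu3 with h1 | ⟨hu1, k, hk0, hfk⟩
      · -- u = -1 : contradiction
        exfalso
        have hu'eq : u' = -C c₁ := by
          rw [hu'2, h1]; ring
        have hB2 : B = C lam * f - C c₁ := by rw [hBrep, hu'eq]; ring
        have hdvd1 : f ∣ C c₁ * Bt + 1 := by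
          refine ⟨C lam * Bt - f + 1, ?_⟩
          rw [hB2] at hBt
          linear_combination hBt
        have hne : C c₁ * Bt + 1 ≠ 0 := by
          intro h0
          have h0' : C c₁ * Bt = -1 := by linear_combination h0
          have hdl : (C c₁ * Bt).natDegree = 2 := by
            rw [natDegree_mul (C_ne_zero.mpr hc₁0) hBt0, natDegree_C, hBtdeg]
          rw [h0'] at hdl
          simp at hdl
        have hddeg : (C c₁ * Bt + 1).natDegree ≤ 2 := by
          refine (natDegree_add_le _ _).trans (max_le ?_ ?_)
          · exact (natDegree_C_mul_le _ _).trans (le_of_eq hBtdeg)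
          · simp
        obtain ⟨m, hm0, hmeq⟩ := scalar_of_dvd hdvd1 hne (by omega)
        have hmeq' : C c₁ * Bt = C m * f - 1 := by linear_combination hmeq
        have key : C c₁ * (f^2 - f + 1) = (C lam * f - C c₁) * (C m * f - 1) := by
          linear_combination C c₁ * hBt + B * hmeq' + (C m * f - 1) * hB2
        have key2 : f * ((C c₁ - C lam * C m) * f + (C lam + C c₁ * C m - C c₁)) = 0 := by
          linear_combination key
        have hW : (C c₁ - C lam * C m) * f + (C lam + C c₁ * C m - C c₁) = 0 :=
          (mul_eq_zero.mp key2).resolve_left hf0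
        have hW2 : C (c₁ - lam * m) * f + C (lam + c₁ * m - c₁) = 0 := by
          simp only [C_sub, C_add, C_mul]
          linear_combination hW
        obtain ⟨e1, e2⟩ := indep1 (by omega) hW2
        have hm3 : c₁ * (m^2 - m + 1) = 0 := by linear_combination m * e2 + e1
        rcases mul_eq_zero.mp hm3 with h0 | h0
        · exact hc₁0 h0
        · nlinarith [sq_nonneg (2*m - 1)]
      · -- family 2
        have hcc : C c₁⁻¹ * C c₁ = 1 := by
          rw [← C_mul, inv_mul_cancel₀ hc₁0, C_1]
        have hB3 : B = C lam * f + C c₁ * u := by rw [hBrep, hu'2]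
        have hfQ : f ∣ u^2 - u + 1 := by
          refine ⟨C k⁻¹, ?_⟩
          rw [hfk, mul_comm (C k) _, mul_assoc, ← C_mul, mul_inv_cancel₀ hk0, C_1, mul_one]
        have hdvd2 : f ∣ C c₁ * (u * Bt) - 1 := by
          refine ⟨f - 1 - C lam * Bt, ?_⟩
          rw [hB3] at hBt
          linear_combination -hBt
        have hdvd3 : f ∣ u * (C c₁ * Bt - 1 + u) := by
          have e1 : u * (C c₁ * Bt - 1 + u) = (C c₁ * (u * Bt) - 1) + (u^2 - u + 1) := by
            ring
          rw [e1]; exact dvd_add hdvd2 hfQ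
        have hcop : IsCoprime f u := by
          refine ⟨C k⁻¹, -(u - 1), ?_⟩
          rw [hfk, ← mul_assoc, ← C_mul, inv_mul_cancel₀ hk0, C_1, one_mul]
          ring
        have hdvd4 : f ∣ C c₁ * Bt - 1 + u := hcop.dvd_of_dvd_mul_left hdvd3
        have hvne : C c₁ * Bt - 1 + u ≠ 0 := by
          intro h0
          have h0' : C c₁ * Bt = 1 - u := by linear_combination h0
          have hdl : (C c₁ * Bt).natDegree = 2 := by
            rw [natDegree_mul (C_ne_zero.mpr hc₁0) hBt0, natDegree_C, hBtdeg]
          rw [h0'] at hdl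
          have : (1 - u).natDegree ≤ 1 := (natDegree_sub_le _ _).trans (by simp [hu1])
          omega
        have hvdeg : (C c₁ * Bt - 1 + u).natDegree ≤ 2 := by
          refine (natDegree_add_le _ _).trans (max_le ((natDegree_sub_le _ _).trans (max_le ?_ ?_)) ?_)
          · exact (natDegree_C_mul_le _ _).trans (le_of_eq hBtdeg)
          · simp
          · omega
        obtain ⟨d, hd0, hdeq⟩ := scalar_of_dvd hdvd4 hvne (by omega)
        have hBt4 : C c₁ * Bt = C d * f + 1 - u := by linear_combination hdeq
        have key : C c₁ * (f^2 - f + 1) = (C lam * f + C c₁ * u) * (C d * f + 1 - u) := by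
          linear_combination C c₁ * hBt + B * hBt4 + (C d * f + 1 - u) * hB3
        rw [hfk] at key
        have key2 : (u^2 - u + 1) * ((C c₁ - C lam * C d) * C k^2 * (u^2 - u + 1)
            + (C k * C lam - C k * C c₁ * C d) * u + (C c₁ - C k * C c₁ - C k * C lam)) = 0 := by
          linear_combination key
        have hW : (C c₁ - C lam * C d) * C k^2 * (u^2 - u + 1)
            + (C k * C lam - C k * C c₁ * C d) * u + (C c₁ - C k * C c₁ - C k * C lam) = 0 :=
          (mul_eq_zero.mp key2).resolve_left (noroot_ne u)
        have hW2 : C ((c₁ - lam*d)*k^2) * u^2 + C ((k*lam - k*c₁*d) - (c₁ - lam*d)*k^2) * u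
            + C ((c₁ - lam*d)*k^2 + (c₁ - k*c₁ - k*lam)) = 0 := by
          simp only [C_sub, C_add, C_mul, C_pow]
          linear_combination hW
        obtain ⟨ea, eb, ec⟩ := indep2 hu1 hW2
        have ea' : c₁ = lam * d := by
          rcases mul_eq_zero.mp ea with h0 | h0
          · linarith
          · exact absurd (pow_eq_zero_iff (by norm_num) |>.mp h0) hk0
        have eb' : lam = c₁ * d := by
          have : k * (lam - c₁ * d) = 0 := by linear_combination eb + ea
          rcases mul_eq_zero.mp this with h0 | h0
          · exact absurd h0 hk0
          · linarith
        have ec' : c₁ - k*c₁ - k*lam = 0 := by linear_combination ec - ea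
        have hd2 : d^2 = 1 := by
          have : c₁ * (d^2 - 1) = 0 := by linear_combination -(d * eb') - ea'
          rcases mul_eq_zero.mp this with h0 | h0
          · exact absurd h0 hc₁0
          · linarith
        have hdd : d = 1 := by
          have h0 : (d - 1) * (d + 1) = 0 := by linear_combination hd2
          rcases mul_eq_zero.mp h0 with h1 | h1
          · linarith
          · exfalso
            have hdneg : d = -1 := by linarith
            rw [hdneg] at eb'
            rw [eb'] at ec'
            exact hc₁0 (by linear_combination ec')
        have hk12 : k = 1/2 := by
          rw [hdd] at eb'
          rw [eb'] at ec'
          have : c₁ * (1 - 2*k) = 0 := by linear_combination ec'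
          rcases mul_eq_zero.mp this with h0 | h0
          · exact absurd h0 hc₁0
          · linarith
        have hffin : f = C (1/2:ℚ) * (u^2 - u + 1) := by rw [hfk, hk12]
        right
        refine ⟨u, hu1, hffin, ?_⟩
        have hgfin : g = (f + 1) * (f + u) := by
          rw [hgrep, hB3, eb', hdd, mul_one]
          linear_combination ((f+1)*(f+u)) * hcc
        rw [hgfin, hffin]
        apply mul_left_cancel₀ (show (4:ℚ[X]) ≠ 0 by norm_num)
        linear_combination ((u^2-u+1)^2*(2*C (1/2:ℚ)+1) + 2*(u^2-u+1)*(u+1)) * h2C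
          - ((u^2-u+1+2*u)*(u^2-u+1+2)) * h4C
  · rintro (hg1 | ⟨h, hh1, hfh, hgh⟩)
    · refine ⟨f^3 - 2*f^2 + 3*f - 3, ?_⟩
      rw [hg1]; ring
    · rw [hfh, hgh]
      have hC4 : C (1/4 : ℚ) = C (1/2 : ℚ)^2 := by rw [← C_pow]; norm_num
      refine ⟨C (1/2:ℚ)^3 * (h^6 + h^5 + 6*h^4 + 9*h^3 + 18*h^2 + 21*h + 33), ?_⟩
      rw [hC4]
      linear_combination (((1:ℚ[X]) + 2*(C (1/2:ℚ)) + 4*(C (1/2:ℚ))^2) *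
        ((C (1/2:ℚ))^3 * (-h^6+3*h^5-6*h^4+7*h^3-6*h^2+3*h-9) - 1)) * h2C
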